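/- Let A be a set and 𝒜 a submonoid of the monoid of endorelations on A under relational composition (i.e. 1_A ∈ 𝒜 and 𝒜 is closed under composition). Then the assignment sending a relation r : X ⇸ Y to the relation Ĥ_A^𝒜 r : X^A ⇸ Y^A is a lax extension of the exponential functor H_A = (−)^A. Furthermore: (1) if 𝒜 is closed under converses, then Ĥ_A^𝒜 preserves converses, i.e. Ĥ_A^𝒜(r°) = (Ĥ_A^𝒜 r)° for all r; (2) if every relation in 𝒜 is normal, then Ĥ_A^𝒜 is normal. -/

import Mathlib

open CategoryTheory Function

universe u

/-- Applicative composition of relations: `relComp s r = s · r`. -/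
def relComp {X Y Z : Type u} (s : Y → Z → Prop) (r : X → Y → Prop) : X → Z → Prop :=
  fun x z => ∃ y, r x y ∧ s y z

/-- Converse of a relation. -/
def relConv {X Y : Type u} (r : X → Y → Prop) : Y → X → Prop := fun y x => r x y

/-- Graph relation of a function. -/
def fgraph {X Y : Type u} (f : X → Y) : X → Y → Prop := fun x y => f x = y

/-- An `F`-relator: a monotone assignment of relations `F X ⇸ F Y` to relations `X ⇸ Y`. -/
structure Relator (F : Type u ⥤ Type u) : Type (u + 1) where
  map : ∀ {X Y : Type u}, (X → Y → Prop) → (F.obj X → F.obj Y → Prop)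
  mono : ∀ {X Y : Type u} {r s : X → Y → Prop}, (∀ x y, r x y → s x y) →
    ∀ u v, map r u v → map s u v

/-- `f` is a coalgebra homomorphism from `(X, α)` to `(Y, β)`. -/
def IsCoalgHom (F : Type u ⥤ Type u) {X Y : Type u} (α : X → F.obj X) (β : Y → F.obj Y)
    (f : X → Y) : Prop :=
  ∀ x, β (f x) = F.map (TypeCat.ofHom f) (α x)

/-- Behavioural equivalence of states. -/
def BehEq (F : Type u ⥤ Type u) {X Y : Type u} (α : X → F.obj X) (β : Y → F.obj Y)
    (x : X) (y : Y) : Prop :=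
  ∃ (Z : Type u) (γ : Z → F.obj Z) (f : X → Z) (g : Y → Z),
    IsCoalgHom F α γ f ∧ IsCoalgHom F β γ g ∧ f x = g y

/-- `r` is a `Λ`-simulation from `(X, α)` to `(Y, β)`: `r ≤ β° · Λr · α`. -/
def IsSimulation {F : Type u ⥤ Type u} (Λ : Relator F) {X Y : Type u}
    (α : X → F.obj X) (β : Y → F.obj Y) (r : X → Y → Prop) : Prop :=
  ∀ x y, r x y → Λ.map r (α x) (β y)

/-- `x` and `y` are `Λ`-similar: related by some `Λ`-simulation. -/
def RelSimilar {F : Type u ⥤ Type u} (Λ : Relator F) {X Y : Type u}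
    (α : X → F.obj X) (β : Y → F.obj Y) (x : X) (y : Y) : Prop :=
  ∃ r, IsSimulation Λ α β r ∧ r x y

/-- `Λ` is a relax extension of `F`: `Ff ≤ Λf` and `(Ff)° ≤ Λ(f°)` for all functions `f`. -/
def IsRelaxExtension (F : Type u ⥤ Type u) (Λ : Relator F) : Prop :=
  ∀ {X Y : Type u} (f : X → Y),
    (∀ (u : F.obj X) (v : F.obj Y), F.map (TypeCat.ofHom f) u = v → Λ.map (fgraph f) u v) ∧
    (∀ (v : F.obj Y) (u : F.obj X), F.map (TypeCat.ofHom f) u = v → Λ.map (relConv (fgraph f)) v u)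

/-- `Λ` is a lax extension of `F`: a relax extension with `Λs · Λr ≤ Λ(s · r)`. -/
def IsLaxExtension (F : Type u ⥤ Type u) (Λ : Relator F) : Prop :=
  IsRelaxExtension F Λ ∧
    ∀ {X Y Z : Type u} (r : X → Y → Prop) (s : Y → Z → Prop)
      (u : F.obj X) (w : F.obj Z),
      relComp (Λ.map s) (Λ.map r) u w → Λ.map (relComp s r) u w

/-- `Λ` is normal: `Λ1_X = 1_{FX}` for every set `X`. -/
def IsNormal (F : Type u ⥤ Type u) (Λ : Relator F) : Prop :=
  ∀ (X : Type u) (u v : F.obj X), Λ.map (@Eq X) u v ↔ u = v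

/-- A relation is difunctional if it is of the form `g° · f` for functions `f`, `g`. -/
def IsDifunctional {X Y : Type u} (r : X → Y → Prop) : Prop :=
  ∃ (Z : Type u) (f : X → Z) (g : Y → Z), ∀ x y, r x y ↔ f x = g y

/-- `c` is the difunctional closure of `r`. -/
def IsDifunClosure {X Y : Type u} (r c : X → Y → Prop) : Prop :=
  IsDifunctional c ∧ (∀ x y, r x y → c x y) ∧
    ∀ d : X → Y → Prop, IsDifunctional d → (∀ x y, r x y → d x y) → ∀ x y, c x y → d x y

/-- An endorelation `φ` on `A` is normal if its difunctional closure is reflexive. -/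
def NormalRel {A : Type u} (φ : A → A → Prop) : Prop :=
  ∃ c : A → A → Prop, IsDifunClosure φ c ∧ ∀ a, c a a

/-- The exponential functor `H_A = (−)^A`. -/
def expFunctor (A : Type u) : Type u ⥤ Type u where
  obj X := A → X
  map f := TypeCat.ofHom (fun h => f ∘ h)
  map_id := by intros; rfl
  map_comp := by intros; rfl

/-- The relator `Ĥ_A^𝒜` induced by a set `𝒜` of endorelations on `A`:
`f (Ĥ_A^𝒜 r) g` iff `φ ≤ g° · r · f` for some `φ ∈ 𝒜`. -/
def hatRelator (A : Type u) (𝒜 : Set (A → A → Prop)) : Relator (expFunctor A) where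
  map r f g := ∃ φ ∈ 𝒜, ∀ a b, φ a b → r (f a) (g b)
  mono h u v := fun ⟨φ, hφ, hp⟩ => ⟨φ, hφ, fun a b hab => h _ _ (hp a b hab)⟩

/-- If `𝒜` is a submonoid of the monoid of endorelations on `A`
under relational composition, then `Ĥ_A^𝒜` is a lax extension of `H_A = (−)^A`.
Moreover: (1) if `𝒜` is closed under converses, then `Ĥ_A^𝒜` preserves converses;
(2) if every relation in `𝒜` is normal, then `Ĥ_A^𝒜` is normal. -/
theorem stmt14 (A : Type u) (𝒜 : Set (A → A → Prop))
    (hid : (@Eq A) ∈ 𝒜)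
    (hcomp : ∀ φ ψ : A → A → Prop, φ ∈ 𝒜 → ψ ∈ 𝒜 → relComp ψ φ ∈ 𝒜) :
    IsLaxExtension (expFunctor A) (hatRelator A 𝒜) ∧
    ((∀ φ ∈ 𝒜, relConv φ ∈ 𝒜) →
      ∀ (X Y : Type u) (r : X → Y → Prop)
        (g : (expFunctor A).obj Y) (f : (expFunctor A).obj X),
        (hatRelator A 𝒜).map (relConv r) g f ↔ (hatRelator A 𝒜).map r f g) ∧
    ((∀ φ ∈ 𝒜, NormalRel φ) → IsNormal (expFunctor A) (hatRelator A 𝒜)) := by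
  refine ⟨⟨?_, ?_⟩, ?_, ?_⟩
  · intro X Y f
    constructor
    · rintro u v rfl
      exact ⟨Eq, hid, fun a b hab => by simp [fgraph, expFunctor, hab]; rfl⟩
    · rintro v u rfl
      exact ⟨Eq, hid, fun a b hab => by simp [fgraph, relConv, expFunctor, hab]; rfl⟩
  · rintro X Y Z r s u w ⟨v, ⟨φ, hφ, h1⟩, ⟨ψ, hψ, h2⟩⟩
    exact ⟨relComp ψ φ, hcomp φ ψ hφ hψ,
      fun a c ⟨b, hab, hbc⟩ => ⟨v b, h1 a b hab, h2 b c hbc⟩⟩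
  · intro hconv X Y r g f
    constructor
    · rintro ⟨φ, hφ, h⟩
      exact ⟨relConv φ, hconv φ hφ, fun a b hab => h b a hab⟩
    · rintro ⟨φ, hφ, h⟩
      exact ⟨relConv φ, hconv φ hφ, fun a b hab => h b a hab⟩
  · intro hnorm X u v
    constructor
    · rintro ⟨φ, hφ, h⟩
      obtain ⟨c, ⟨hcdif, hle, hmin⟩, hrefl⟩ := hnorm φ hφ
      funext a
      exact hmin (fun x y => u x = v y) ⟨X, u, v, fun _ _ => Iff.rfl⟩
        (fun x y hxy => h x y hxy) a a (hrefl a)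
    · rintro rfl
      exact ⟨Eq, hid, fun a b hab => by rw [hab]⟩
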